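/- For every fixed p ∈ (0,1), the sequence H(N,p) converges as N → ∞ to the binary Shannon entropy S(p); that is, lim_{N→∞} H(N,p) = S(p). -/

import Mathlib

open Finset Filter

/-- Average encoding efficiency
`H N p = (1/N) ∑_{k=1}^{N-1} C(N,k) p^k (1-p)^(N-k) log₂ C(N,k)`. -/
noncomputable def H (N : ℕ) (p : ℝ) : ℝ :=
  (1 / (N : ℝ)) * ∑ k ∈ Finset.Ico 1 N,
    (N.choose k : ℝ) * p ^ k * (1 - p) ^ (N - k) * Real.logb 2 (N.choose k)

/-- Binary Shannon entropy `S(p) = −p log₂ p − (1−p) log₂ (1−p)`. -/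
noncomputable def S (p : ℝ) : ℝ :=
  -(p * Real.logb 2 p) - (1 - p) * Real.logb 2 (1 - p)

/-- The binomial probability mass function. -/
noncomputable def Pb (p : ℝ) (N k : ℕ) : ℝ :=
  (N.choose k : ℝ) * p ^ k * (1 - p) ^ (N - k)

private lemma sum_binom (p : ℝ) (N : ℕ) :
    ∑ k ∈ range (N + 1), Pb p N k = 1 := by
  have h := add_pow p (1 - p) N
  have h1 : p + (1 - p) = 1 := by ring
  rw [h1, one_pow] at h
  rw [h]
  exact sum_congr rfl fun k _ => by simp [Pb]; ring

private lemma Pb_pos (p : ℝ) (hp0 : 0 < p) (hp1 : p < 1) {N k : ℕ} (hk : k ≤ N) :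
    0 < Pb p N k := by
  have hC : (0 : ℝ) < (N.choose k : ℝ) := by exact_mod_cast Nat.choose_pos hk
  have hq : 0 < 1 - p := by linarith
  unfold Pb
  positivity

private lemma Pb_le_one (p : ℝ) (hp0 : 0 < p) (hp1 : p < 1) {N k : ℕ}
    (hk : k ∈ range (N + 1)) : Pb p N k ≤ 1 := by
  rw [← sum_binom p N]
  exact Finset.single_le_sum
    (fun i hi => (Pb_pos p hp0 hp1 (Nat.lt_succ_iff.mp (mem_range.mp hi))).le) hk

private lemma sum_mean (p : ℝ) (N : ℕ) (hN : 1 ≤ N) :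
    ∑ k ∈ range (N + 1), (k : ℝ) * Pb p N k = N * p := by
  obtain ⟨M, rfl⟩ : ∃ M, N = M + 1 := ⟨N - 1, (Nat.succ_pred_eq_of_pos hN).symm⟩
  rw [Finset.sum_range_succ']
  have h0 : ((0 : ℕ) : ℝ) * Pb p (M + 1) 0 = 0 := by simp
  rw [h0, add_zero]
  have hterm : ∀ j ∈ range (M + 1),
      ((j + 1 : ℕ) : ℝ) * Pb p (M + 1) (j + 1)
        = ((M : ℝ) + 1) * p * Pb p M j := by
    intro j hj
    have e : ((j : ℝ) + 1) * (((M + 1).choose (j + 1) : ℕ) : ℝ)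
        = ((M : ℝ) + 1) * (M.choose j : ℝ) := by
      have h := Nat.add_one_mul_choose_eq M j
      have h2 := congrArg (fun n : ℕ => (n : ℝ)) h
      push_cast at h2
      linarith
    have hsub : M + 1 - (j + 1) = M - j := by omega
    simp only [Pb, hsub]
    push_cast
    linear_combination (p ^ (j + 1) * (1 - p) ^ (M - j)) * e
  rw [Finset.sum_congr rfl hterm, ← Finset.mul_sum, sum_binom p M]
  push_cast
  ring

private lemma key (p : ℝ) (hp0 : 0 < p) (hp1 : p < 1) (N : ℕ) (hN : 1 ≤ N) :
    H N p = S p + (1 / (N : ℝ)) *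
      ∑ k ∈ range (N + 1), Pb p N k * Real.logb 2 (Pb p N k) := by
  have hq : 0 < 1 - p := by linarith
  have hNpos : (0 : ℝ) < N := by exact_mod_cast hN
  -- extend the sum to range (N+1)
  have hext : ∑ k ∈ Finset.Ico 1 N,
      (N.choose k : ℝ) * p ^ k * (1 - p) ^ (N - k) * Real.logb 2 (N.choose k)
      = ∑ k ∈ range (N + 1), Pb p N k * Real.logb 2 (N.choose k) := by
    rw [Finset.sum_range_succ, Finset.range_eq_Ico,
      Finset.sum_eq_sum_Ico_succ_bot (by omega : 0 < N)]
    simp [Pb, Nat.choose_self, Nat.choose_zero_right]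
  -- per-term expansion of logb of Pb
  have hsplit : ∀ k ∈ range (N + 1),
      Pb p N k * Real.logb 2 (Pb p N k)
        = Pb p N k * Real.logb 2 (N.choose k)
          + Real.logb 2 p * ((k : ℝ) * Pb p N k)
          + Real.logb 2 (1 - p) * ((((N : ℝ)) - (k : ℝ)) * Pb p N k) := by
    intro k hk
    have hkN : k ≤ N := Nat.lt_succ_iff.mp (mem_range.mp hk)
    have hC : (0 : ℝ) < (N.choose k : ℝ) := by exact_mod_cast Nat.choose_pos hkN
    have h1 : Real.logb 2 (Pb p N k)
        = Real.logb 2 (N.choose k) + (k : ℝ) * Real.logb 2 p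
          + ((N - k : ℕ) : ℝ) * Real.logb 2 (1 - p) := by
      rw [Pb, Real.logb_mul (by positivity) (by positivity),
        Real.logb_mul (by positivity) (by positivity),
        Real.logb_pow, Real.logb_pow]
    have hcast : ((N - k : ℕ) : ℝ) = (N : ℝ) - (k : ℝ) := by
      exact Nat.cast_sub hkN
    rw [h1, hcast]; ring
  rw [H, hext]
  rw [Finset.sum_congr rfl hsplit]
  rw [Finset.sum_add_distrib, Finset.sum_add_distrib, ← Finset.mul_sum, ← Finset.mul_sum]
  have hmean := sum_mean p N hN
  have hmean2 : ∑ k ∈ range (N + 1), (((N : ℝ)) - (k : ℝ)) * Pb p N k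
      = (N : ℝ) * (1 - p) := by
    have : ∀ k ∈ range (N + 1), (((N : ℝ)) - (k : ℝ)) * Pb p N k
        = (N : ℝ) * Pb p N k - (k : ℝ) * Pb p N k := fun k _ => by ring
    rw [Finset.sum_congr rfl this, Finset.sum_sub_distrib, ← Finset.mul_sum,
      sum_binom p N, hmean]
    ring
  rw [hmean, hmean2, S]
  field_simp
  ring

private lemma T_nonpos (p : ℝ) (hp0 : 0 < p) (hp1 : p < 1) (N : ℕ) :
    ∑ k ∈ range (N + 1), Pb p N k * Real.logb 2 (Pb p N k) ≤ 0 := by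
  apply Finset.sum_nonpos
  intro k hk
  have hpos := Pb_pos p hp0 hp1 (Nat.lt_succ_iff.mp (mem_range.mp hk))
  have hle := Pb_le_one p hp0 hp1 hk
  exact mul_nonpos_of_nonneg_of_nonpos hpos.le
    (Real.logb_nonpos one_lt_two hpos.le hle)

private lemma T_lower (p : ℝ) (hp0 : 0 < p) (hp1 : p < 1) (N : ℕ) :
    -Real.logb 2 ((N : ℝ) + 1)
      ≤ ∑ k ∈ range (N + 1), Pb p N k * Real.logb 2 (Pb p N k) := by
  have hN1 : (0 : ℝ) < (N : ℝ) + 1 := by positivity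
  -- Gibbs inequality with natural log
  have gibbs : -Real.log ((N : ℝ) + 1)
      ≤ ∑ k ∈ range (N + 1), Pb p N k * Real.log (Pb p N k) := by
    have hterm : ∀ k ∈ range (N + 1),
        Pb p N k * (Real.log (1 / ((N : ℝ) + 1)) - Real.log (Pb p N k))
          ≤ 1 / ((N : ℝ) + 1) - Pb p N k := by
      intro k hk
      have hpos := Pb_pos p hp0 hp1 (Nat.lt_succ_iff.mp (mem_range.mp hk))
      have hx : (0 : ℝ) < (1 / ((N : ℝ) + 1)) / Pb p N k := by positivity
      have hlog := Real.log_le_sub_one_of_pos hx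
      have := mul_le_mul_of_nonneg_left hlog hpos.le
      calc Pb p N k * (Real.log (1 / ((N : ℝ) + 1)) - Real.log (Pb p N k))
          = Pb p N k * Real.log ((1 / ((N : ℝ) + 1)) / Pb p N k) := by
            rw [Real.log_div (by positivity) (ne_of_gt hpos)]
        _ ≤ Pb p N k * ((1 / ((N : ℝ) + 1)) / Pb p N k - 1) := this
        _ = 1 / ((N : ℝ) + 1) - Pb p N k := by field_simp
    have hsum := Finset.sum_le_sum hterm
    have hrhs : ∑ _k ∈ range (N + 1), (1 / ((N : ℝ) + 1) - Pb p N _k)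
        = 0 := by
      rw [Finset.sum_sub_distrib, sum_binom p N, Finset.sum_const, card_range]
      simp only [nsmul_eq_mul]
      push_cast
      field_simp
      exact sub_self 1
    have hlhs : ∑ k ∈ range (N + 1),
        Pb p N k * (Real.log (1 / ((N : ℝ) + 1)) - Real.log (Pb p N k))
        = Real.log (1 / ((N : ℝ) + 1))
          - ∑ k ∈ range (N + 1), Pb p N k * Real.log (Pb p N k) := by
      have : ∀ k ∈ range (N + 1),
          Pb p N k * (Real.log (1 / ((N : ℝ) + 1)) - Real.log (Pb p N k))
            = Real.log (1 / ((N : ℝ) + 1)) * Pb p N k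
              - Pb p N k * Real.log (Pb p N k) := fun k _ => by ring
      rw [Finset.sum_congr rfl this, Finset.sum_sub_distrib, ← Finset.mul_sum,
        sum_binom p N, mul_one]
    rw [hlhs, hrhs] at hsum
    have hlog1 : Real.log (1 / ((N : ℝ) + 1)) = -Real.log ((N : ℝ) + 1) := by
      rw [one_div, Real.log_inv]
    rw [hlog1] at hsum
    linarith
  -- convert to logb
  have hlog2 : (0 : ℝ) < Real.log 2 := Real.log_pos one_lt_two
  have hconv : ∑ k ∈ range (N + 1), Pb p N k * Real.logb 2 (Pb p N k)
      = (∑ k ∈ range (N + 1), Pb p N k * Real.log (Pb p N k)) / Real.log 2 := by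
    rw [Finset.sum_div]
    exact Finset.sum_congr rfl fun k _ => by rw [Real.logb]; ring
  rw [hconv, Real.logb, ← neg_div]
  gcongr

/-- For every fixed `p ∈ (0,1)`, `H(N,p) → S(p)` as `N → ∞`. -/
theorem H_tendsto_shannon (p : ℝ) (hp0 : 0 < p) (hp1 : p < 1) :
    Tendsto (fun N : ℕ => H N p) atTop (nhds (S p)) := by
  set T : ℕ → ℝ := fun N => ∑ k ∈ range (N + 1), Pb p N k * Real.logb 2 (Pb p N k)
    with hT
  -- the error term tends to zero
  have herr : Tendsto (fun N : ℕ => (1 / (N : ℝ)) * T N) atTop (nhds 0) := by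
    have hlow : Tendsto (fun N : ℕ => -(Real.logb 2 ((N : ℝ) + 1) / (N : ℝ)))
        atTop (nhds 0) := by
      have h1 : Tendsto (fun x : ℝ => Real.log x / (Real.log 2 * x + -Real.log 2))
          atTop (nhds 0) := by
        simpa using Real.tendsto_pow_log_div_mul_add_atTop (Real.log 2) (-Real.log 2) 1
          (ne_of_gt (Real.log_pos one_lt_two))
      have h2 : Tendsto (fun N : ℕ => (N : ℝ) + 1) atTop atTop :=
        tendsto_natCast_atTop_atTop.atTop_add tendsto_const_nhds
      have h3 := h1.comp h2
      have heq : ∀ᶠ N : ℕ in atTop,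
          Real.log ((N : ℝ) + 1) / (Real.log 2 * ((N : ℝ) + 1) + -Real.log 2)
            = Real.logb 2 ((N : ℝ) + 1) / (N : ℝ) := by
        filter_upwards [eventually_ge_atTop 1] with N hN
        have hNpos : (0 : ℝ) < N := by exact_mod_cast hN
        have hlog2 : (0 : ℝ) < Real.log 2 := Real.log_pos one_lt_two
        rw [Real.logb]
        have : Real.log 2 * ((N : ℝ) + 1) + -Real.log 2 = Real.log 2 * (N : ℝ) := by ring
        rw [this, div_div]
      have h4 : Tendsto (fun N : ℕ => Real.logb 2 ((N : ℝ) + 1) / (N : ℝ))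
          atTop (nhds 0) := h3.congr' heq
      simpa using h4.neg
    apply tendsto_of_tendsto_of_tendsto_of_le_of_le' hlow tendsto_const_nhds
    · filter_upwards [eventually_ge_atTop 1] with N hN
      have hNpos : (0 : ℝ) < N := by exact_mod_cast hN
      have hstep : -Real.logb 2 ((N : ℝ) + 1) * (1 / (N : ℝ)) ≤ T N * (1 / (N : ℝ)) :=
        mul_le_mul_of_nonneg_right (T_lower p hp0 hp1 N) (by positivity)
      calc -(Real.logb 2 ((N : ℝ) + 1) / (N : ℝ))
          = -Real.logb 2 ((N : ℝ) + 1) * (1 / (N : ℝ)) := by ring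
        _ ≤ T N * (1 / (N : ℝ)) := hstep
        _ = (1 / (N : ℝ)) * T N := by ring
    · filter_upwards [eventually_ge_atTop 1] with N hN
      have hNpos : (0 : ℝ) < N := by exact_mod_cast hN
      have h := T_nonpos p hp0 hp1 N
      have : (1 / (N : ℝ)) * T N ≤ (1 / (N : ℝ)) * 0 :=
        mul_le_mul_of_nonneg_left h (by positivity)
      simpa using this
  have hfinal : Tendsto (fun N : ℕ => S p + (1 / (N : ℝ)) * T N) atTop (nhds (S p)) := by
    have h := herr.const_add (S p)
    rw [add_zero] at h
    exact h
  apply hfinal.congr'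
  filter_upwards [eventually_ge_atTop 1] with N hN
  exact (key p hp0 hp1 N hN).symm
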